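/- In the Houghton group H_n (n ≥ 3), for i ≠ j and positive integers c_i, c_j, the commutator [g_i^{c_i}, g_j^{c_j}] is an odd finitary permutation if and only if both c_i and c_j are odd. -/

import Mathlib

/-- The group of finitary permutations of `X`: those with finite support. -/
def FSym (X : Type*) : Subgroup (Equiv.Perm X) where
  carrier := {g | {x | g x ≠ x}.Finite}
  one_mem' := by simp
  mul_mem' := by
    intro a b ha hb
    refine (Set.Finite.union ha hb).subset fun x hx => ?_
    simp only [Set.mem_setOf_eq, Set.mem_union, Equiv.Perm.mul_apply] at hx ⊢
    by_cases h : b x = x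
    · left; rwa [h] at hx
    · right; exact h
  inv_mem' := by
    intro a ha
    refine ha.subset fun x hx => ?_
    simp only [Set.mem_setOf_eq] at hx ⊢
    intro h
    exact hx (Equiv.Perm.inv_eq_iff_eq.mpr h.symm)

/-- A permutation is even (finitary) if it is a product of an even number of transpositions. -/
def IsEvenPerm {X : Type*} [DecidableEq X] (g : Equiv.Perm X) : Prop :=
  ∃ l : List (Equiv.Perm X), (∀ τ ∈ l, τ.IsSwap) ∧ Even l.length ∧ g = l.prod

/-- A permutation is odd (finitary) if it is a product of an odd number of transpositions. -/
def IsOddPerm {X : Type*} [DecidableEq X] (g : Equiv.Perm X) : Prop :=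
  ∃ l : List (Equiv.Perm X), (∀ τ ∈ l, τ.IsSwap) ∧ Odd l.length ∧ g = l.prod

/-- `Alt(X)`: the group of even finitary permutations of `X`. -/
def AltGroup (X : Type*) [DecidableEq X] : Subgroup (Equiv.Perm X) where
  carrier := {g | IsEvenPerm g}
  one_mem' := ⟨[], by simp, by simp, by simp⟩
  mul_mem' := by
    rintro a b ⟨l₁, hs₁, he₁, hp₁⟩ ⟨l₂, hs₂, he₂, hp₂⟩
    refine ⟨l₁ ++ l₂, ?_, by simpa using he₁.add he₂, by rw [hp₁, hp₂, List.prod_append]⟩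
    intro τ hτ
    rcases List.mem_append.mp hτ with h | h
    exacts [hs₁ τ h, hs₂ τ h]
  inv_mem' := by
    rintro a ⟨l, hs, he, hp⟩
    refine ⟨(l.map fun x => x⁻¹).reverse, ?_, by simpa using he, ?_⟩
    · intro τ hτ
      simp only [List.mem_reverse, List.mem_map] at hτ
      obtain ⟨σ, hσ, rfl⟩ := hτ
      obtain ⟨x, y, hxy, rfl⟩ := hs σ hσ
      exact ⟨x, y, hxy, by simp⟩
    · rw [hp, List.prod_inv_reverse]


/-- The generator `g_k` (for `k ≠ 0`) of Houghton's group `H_n`, acting on `Fin n × ℕ`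
(rays indexed `0, …, n-1`, ray `0` playing the role of ray `1` in the paper, and
points on each ray indexed from `0`): it translates ray `0` up by one, translates
ray `k` down by one, and sends the bottom point of ray `k` to the bottom point of
ray `0`. -/
def houghtonGen (n : ℕ) [NeZero n] (k : Fin n) (hk : k ≠ 0) : Equiv.Perm (Fin n × ℕ) where
  toFun p :=
    if p.1 = 0 then ((0 : Fin n), p.2 + 1)
    else if p.1 = k then (if p.2 = 0 then ((0 : Fin n), 0) else (k, p.2 - 1))
    else p
  invFun p :=
    if p.1 = 0 then (if p.2 = 0 then (k, 0) else ((0 : Fin n), p.2 - 1))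
    else if p.1 = k then (k, p.2 + 1)
    else p
  left_inv := by
    rintro ⟨i, m⟩
    by_cases h0 : i = 0
    · subst h0; simp
    · by_cases hik : i = k
      · subst hik
        rcases m with _ | m
        · simp [hk]
        · simp [hk]
      · simp [h0, hik]
  right_inv := by
    rintro ⟨i, m⟩
    by_cases h0 : i = 0
    · subst h0
      rcases m with _ | m
      · simp [hk]
      · simp
    · by_cases hik : i = k
      · subst hik; simp [hk]
      · simp [h0, hik]

section Parity
open Equiv Equiv.Perm
variable {X : Type*} [DecidableEq X]

lemma swap_preserves {τ : Equiv.Perm X} (hτ : τ.IsSwap) {S : Set X}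
    (hs : ∀ x, τ x ≠ x → x ∈ S) : ∀ x, x ∈ S ↔ τ x ∈ S := by
  intro x
  by_cases h : τ x = x
  · rw [h]
  · obtain ⟨a, b, hab, rfl⟩ := hτ
    constructor
    · intro _
      refine hs _ ?_
      rw [Equiv.swap_apply_self]
      exact fun hh => h hh.symm
    · intro _; exact hs _ h

lemma prod_preserves : ∀ (l : List (Equiv.Perm X)) (S : Set X),
    (∀ τ ∈ l, ∀ x, x ∈ S ↔ τ x ∈ S) → ∀ x, x ∈ S ↔ l.prod x ∈ S := by
  intro l
  induction l with
  | nil => intro S _ x; simp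
  | cons τ t ih =>
    intro S h x
    rw [List.prod_cons, Equiv.Perm.mul_apply]
    exact (ih S (fun σ hσ => h σ (List.mem_cons_of_mem _ hσ)) x).trans
      (h τ (List.mem_cons_self) _)

lemma subtypePerm_swap {a b : X} (hab : a ≠ b) {S : Set X}
    (ha : a ∈ S) (hb : b ∈ S) (h : ∀ x, x ∈ S ↔ Equiv.swap a b x ∈ S) :
    (Equiv.swap a b).subtypePerm (fun x => (h x).symm) = Equiv.swap (⟨a, ha⟩ : S) ⟨b, hb⟩ := by
  ext ⟨x, hx⟩
  simp only [Equiv.Perm.subtypePerm_apply]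
  rcases eq_or_ne x a with rfl | hxa
  · simp [Equiv.swap_apply_left, Subtype.ext_iff]
  · rcases eq_or_ne x b with rfl | hxb
    · simp [Equiv.swap_apply_right, Subtype.ext_iff]
    · rw [Equiv.swap_apply_of_ne_of_ne hxa hxb,
        Equiv.swap_apply_of_ne_of_ne (fun hh => hxa (congrArg Subtype.val hh))
          (fun hh => hxb (congrArg Subtype.val hh))]

lemma sign_restrict (S : Set X) [Fintype S] :
    ∀ (l : List (Equiv.Perm X)), (∀ τ ∈ l, τ.IsSwap) →
      (∀ τ ∈ l, ∀ x, τ x ≠ x → x ∈ S) →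
      ∀ (H : ∀ x, x ∈ S ↔ l.prod x ∈ S),
      Equiv.Perm.sign ((l.prod).subtypePerm (fun x => (H x).symm)) = (-1) ^ l.length := by
  intro l
  induction l with
  | nil =>
    intro _ _ H
    have h1 : (List.prod ([] : List (Equiv.Perm X))).subtypePerm (fun x => (H x).symm) = 1 := rfl
    rw [h1]
    simp
  | cons τ t ih =>
    intro hsw hsupp H
    have hτs : τ.IsSwap := hsw τ (List.mem_cons_self)
    have hf : ∀ x, x ∈ S ↔ τ x ∈ S :=
      swap_preserves hτs (hsupp τ (List.mem_cons_self))
    have hswt : ∀ σ ∈ t, σ.IsSwap := fun σ hσ => hsw σ (List.mem_cons_of_mem _ hσ)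
    have hsuppt : ∀ σ ∈ t, ∀ x, σ x ≠ x → x ∈ S :=
      fun σ hσ => hsupp σ (List.mem_cons_of_mem _ hσ)
    have hg : ∀ x, x ∈ S ↔ t.prod x ∈ S :=
      prod_preserves t S (fun σ hσ => swap_preserves (hswt σ hσ) (hsuppt σ hσ))
    have key : (List.prod (τ :: t)).subtypePerm (fun x => (H x).symm) =
        τ.subtypePerm (fun x => (hf x).symm) * (t.prod).subtypePerm (fun x => (hg x).symm) := by
      rw [Equiv.Perm.subtypePerm_mul]
      ext x
      simp [List.prod_cons]
      rfl
    rw [key, map_mul, ih hswt hsuppt hg]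
    obtain ⟨a, b, hab, rfl⟩ := hτs
    have ha : a ∈ S := hsupp _ (List.mem_cons_self) a
      (by simp [Equiv.swap_apply_left, hab.symm])
    have hb : b ∈ S := hsupp _ (List.mem_cons_self) b
      (by simp [Equiv.swap_apply_right, hab])
    rw [subtypePerm_swap hab ha hb hf, Equiv.Perm.sign_swap
      (fun hh => hab (congrArg Subtype.val hh))]
    rw [List.length_cons, pow_succ, mul_comm]

/-- A product of swaps equal to the identity has even length. -/
lemma even_length_of_prod_swaps_eq_one {l : List (Equiv.Perm X)}
    (hsw : ∀ τ ∈ l, τ.IsSwap) (h1 : l.prod = 1) : Even l.length := by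
  classical
  set S : Set X := {x | ∃ τ ∈ l, τ x ≠ x} with hSdef
  have hS : S.Finite := by
    have : S = ⋃ τ ∈ {τ | τ ∈ l}, {x | τ x ≠ x} := by
      ext x; simp [hSdef]
    rw [this]
    refine Set.Finite.biUnion l.finite_toSet (fun τ hτ => ?_)
    obtain ⟨a, b, hab, rfl⟩ := hsw τ hτ
    refine ((Set.finite_singleton b).insert a).subset fun x hx => ?_
    simp only [Set.mem_setOf_eq] at hx
    by_contra hmem
    simp only [Set.mem_insert_iff, Set.mem_singleton_iff, not_or] at hmem
    exact hx (Equiv.swap_apply_of_ne_of_ne hmem.1 hmem.2)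
  haveI := hS.fintype
  have hsupp : ∀ τ ∈ l, ∀ x, τ x ≠ x → x ∈ S := fun τ hτ x hx => ⟨τ, hτ, hx⟩
  have H : ∀ x, x ∈ S ↔ l.prod x ∈ S := by
    rw [h1]; intro x; simp
  have := sign_restrict S l hsw hsupp H
  have h2 : (l.prod).subtypePerm (fun x => (H x).symm) = 1 := by
    ext x
    simp [h1]
  rw [h2, map_one] at this
  rcases Nat.even_or_odd l.length with he | ho
  · exact he
  · exfalso
    rw [ho.neg_one_pow] at this
    exact (by decide : ¬((1 : ℤˣ) = -1)) this

/-- Parity of swap decompositions is well defined. -/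
lemma parity_unique {l₁ l₂ : List (Equiv.Perm X)}
    (h₁ : ∀ τ ∈ l₁, τ.IsSwap) (h₂ : ∀ τ ∈ l₂, τ.IsSwap)
    (h : l₁.prod = l₂.prod) : Even l₁.length ↔ Even l₂.length := by
  have hrev : ∀ τ ∈ l₂.reverse, τ.IsSwap := fun τ hτ => h₂ τ (List.mem_reverse.mp hτ)
  have hinv : l₂.reverse.prod = (l₂.prod)⁻¹ := by
    rw [List.prod_inv_reverse]
    congr 1
    rw [List.map_congr_left (fun τ hτ => ?_), List.map_id]
    obtain ⟨a, b, hab, rfl⟩ := h₂ τ hτ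
    simp
  have hone : (l₁ ++ l₂.reverse).prod = 1 := by
    rw [List.prod_append, hinv, h, mul_inv_cancel]
  have := even_length_of_prod_swaps_eq_one (l := l₁ ++ l₂.reverse)
    (fun τ hτ => (List.mem_append.mp hτ).elim (h₁ τ) (hrev τ)) hone
  simp only [List.length_append, List.length_reverse] at this
  exact Nat.even_add.mp this

end Parity

section Bridge

variable {α β : Type*} [DecidableEq α] [Fintype α] [DecidableEq β]
  {p : β → Prop} [DecidablePred p]

lemma swap_extendDomain (a b : α) (f : α ≃ Subtype p) :
    (Equiv.swap a b).extendDomain f =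
      Equiv.swap ((f a : Subtype p) : β) ((f b : Subtype p) : β) := by
  ext x
  by_cases hx : p x
  · rw [Equiv.Perm.extendDomain_apply_subtype _ f hx]
    rcases eq_or_ne (f.symm ⟨x, hx⟩) a with ha | ha
    · have hxa : x = ((f a : Subtype p) : β) := by rw [← ha, Equiv.apply_symm_apply]
      rw [ha, Equiv.swap_apply_left, hxa, Equiv.swap_apply_left]
    · rcases eq_or_ne (f.symm ⟨x, hx⟩) b with hb | hb
      · have hxb : x = ((f b : Subtype p) : β) := by rw [← hb, Equiv.apply_symm_apply]
        rw [hb, Equiv.swap_apply_right, hxb, Equiv.swap_apply_right]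
      · rw [Equiv.swap_apply_of_ne_of_ne ha hb, Equiv.apply_symm_apply,
          Equiv.swap_apply_of_ne_of_ne
            (fun h => ha (f.symm_apply_eq.mpr (Subtype.ext h)))
            (fun h => hb (f.symm_apply_eq.mpr (Subtype.ext h)))]
  · rw [Equiv.Perm.extendDomain_apply_not_subtype _ f hx,
      Equiv.swap_apply_of_ne_of_ne]
    · rintro rfl; exact hx (f a).2
    · rintro rfl; exact hx (f b).2

lemma isOddPerm_extendDomain (e : Equiv.Perm α) (f : α ≃ Subtype p) :
    IsOddPerm (e.extendDomain f) ↔ Equiv.Perm.sign e = -1 := by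
  obtain ⟨l, hl, hsw⟩ := (Equiv.Perm.truncSwapFactors e).out
  have hsign : Equiv.Perm.sign e = (-1) ^ l.length := by
    rw [← hl]; exact Equiv.Perm.sign_prod_list_swap hsw
  set L := l.map (fun τ => τ.extendDomain f) with hL
  have hLsw : ∀ τ ∈ L, τ.IsSwap := by
    intro τ hτ
    simp only [hL, List.mem_map] at hτ
    obtain ⟨σ, hσ, rfl⟩ := hτ
    obtain ⟨a, b, hab, rfl⟩ := hsw σ hσ
    exact ⟨_, _, fun h => hab (f.injective (Subtype.coe_injective h)),
      swap_extendDomain a b f⟩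
  have hLprod : L.prod = e.extendDomain f := by
    rw [hL, ← hl]
    exact ((Equiv.Perm.extendDomainHom f).map_list_prod l).symm
  have hLlen : L.length = l.length := by rw [hL, List.length_map]
  constructor
  · rintro ⟨l', hsw', hodd', hprod'⟩
    have hiff := parity_unique hsw' hLsw (by rw [← hprod', hLprod])
    have hoddl : Odd l.length := by
      rw [← hLlen, ← Nat.not_even_iff_odd]
      rw [← Nat.not_even_iff_odd] at hodd'
      exact fun hE => hodd' (hiff.mpr hE)
    rw [hsign]
    exact Odd.neg_one_pow hoddl
  · intro hs
    refine ⟨L, hLsw, ?_, hLprod.symm⟩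
    rw [hLlen]
    by_contra h
    rw [Nat.not_odd_iff_even] at h
    rw [hsign, h.neg_one_pow] at hs
    exact absurd hs (by decide)

end Bridge

lemma houghtonGen_apply (n : ℕ) [NeZero n] (k : Fin n) (hk : k ≠ 0) (r : Fin n) (m : ℕ) :
    houghtonGen n k hk (r, m) =
      if r = 0 then ((0 : Fin n), m + 1)
      else if r = k then (if m = 0 then ((0 : Fin n), 0) else (k, m - 1))
      else (r, m) := rfl

lemma houghtonGen_inv_apply (n : ℕ) [NeZero n] (k : Fin n) (hk : k ≠ 0) (r : Fin n) (m : ℕ) :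
    (houghtonGen n k hk)⁻¹ (r, m) =
      if r = 0 then (if m = 0 then (k, 0) else ((0 : Fin n), m - 1))
      else if r = k then (k, m + 1)
      else (r, m) := rfl

lemma houghtonGen_pow_apply (n : ℕ) [NeZero n] (k : Fin n) (hk : k ≠ 0) (c : ℕ)
    (r : Fin n) (m : ℕ) :
    (houghtonGen n k hk ^ c) (r, m) =
      if r = 0 then ((0 : Fin n), m + c)
      else if r = k then (if m < c then ((0 : Fin n), c - 1 - m) else (k, m - c))
      else (r, m) := by
  induction c generalizing r m with
  | zero =>
    rw [pow_zero, Equiv.Perm.one_apply]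
    rcases eq_or_ne r 0 with rfl | h0
    · simp
    · rcases eq_or_ne r k with rfl | hrk
      · simp [h0]
      · simp [h0, hrk]
  | succ c ih =>
    rw [pow_succ, Equiv.Perm.mul_apply]
    rcases eq_or_ne r 0 with rfl | h0
    · have hstep : houghtonGen n k hk (0, m) = ((0 : Fin n), m + 1) := by
        simp [houghtonGen_apply]
      rw [hstep, ih]
      simp [Prod.ext_iff]
      try omega
    · rcases eq_or_ne r k with rfl | hrk
      · rcases m with _ | s
        · have hstep : houghtonGen n r hk (r, 0) = ((0 : Fin n), 0) := by
            simp [houghtonGen_apply, h0]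
          rw [hstep, ih]
          simp [h0, Prod.ext_iff]
          try omega
        · have hstep : houghtonGen n r hk (r, s + 1) = (r, s) := by
            simp [houghtonGen_apply, h0]
          rw [hstep, ih]
          simp only [if_neg h0, if_pos rfl, if_true]
          by_cases hsc : s < c
          · rw [if_pos hsc, if_pos (by omega : s + 1 < c + 1)]
            simp [Prod.ext_iff]
            try omega
          · rw [if_neg hsc, if_neg (by omega : ¬ s + 1 < c + 1)]
            simp [Prod.ext_iff]
            try omega
      · have hstep : houghtonGen n k hk (r, m) = (r, m) := by
          simp [houghtonGen_apply, h0, hrk]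
        rw [hstep, ih]
        simp [h0, hrk]

lemma houghtonGen_pow_inv_apply (n : ℕ) [NeZero n] (k : Fin n) (hk : k ≠ 0) (c : ℕ)
    (r : Fin n) (m : ℕ) :
    ((houghtonGen n k hk ^ c)⁻¹) (r, m) =
      if r = 0 then (if m < c then (k, c - 1 - m) else ((0 : Fin n), m - c))
      else if r = k then (k, m + c)
      else (r, m) := by
  rw [← inv_pow]
  induction c generalizing r m with
  | zero =>
    rw [pow_zero, Equiv.Perm.one_apply]
    rcases eq_or_ne r 0 with rfl | h0
    · simp
    · rcases eq_or_ne r k with rfl | hrk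
      · simp [h0]
      · simp [h0, hrk]
  | succ c ih =>
    rw [pow_succ, Equiv.Perm.mul_apply]
    rcases eq_or_ne r 0 with rfl | h0
    · rcases m with _ | s
      · have hstep : (houghtonGen n k hk)⁻¹ ((0 : Fin n), (0 : ℕ)) = (k, 0) := by
          rw [houghtonGen_inv_apply]
          simp
        rw [hstep, ih]
        simp [hk, Prod.ext_iff]
        try omega
      · have hstep : (houghtonGen n k hk)⁻¹ (0, s + 1) = ((0 : Fin n), s) := by
          simp [houghtonGen_inv_apply]
        rw [hstep, ih]
        simp only [if_pos rfl, if_true]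
        by_cases hsc : s < c
        · rw [if_pos hsc, if_pos (by omega : s + 1 < c + 1)]
          simp [Prod.ext_iff]
          try omega
        · rw [if_neg hsc, if_neg (by omega : ¬ s + 1 < c + 1)]
          simp [Prod.ext_iff]
          try omega
    · rcases eq_or_ne r k with rfl | hrk
      · have hstep : (houghtonGen n r hk)⁻¹ (r, m) = (r, m + 1) := by
          simp [houghtonGen_inv_apply, h0]
        rw [hstep, ih]
        simp [h0, Prod.ext_iff]
        try omega
      · have hstep : (houghtonGen n k hk)⁻¹ (r, m) = (r, m) := by
          simp [houghtonGen_inv_apply, h0, hrk]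
        rw [hstep, ih]
        simp [h0, hrk]

def houghtonSet (n : ℕ) (i j : Fin n) (ci cj : ℕ) : Fin n × ℕ → Prop :=
  fun x => (x.1 = j ∧ x.2 < cj) ∨ (x.1 = i ∧ x.2 < ci)

instance houghtonSet.decPred (n : ℕ) (i j : Fin n) (ci cj : ℕ) :
    DecidablePred (houghtonSet n i j ci cj) := fun x => by
  unfold houghtonSet; infer_instance

def houghtonEquiv (n : ℕ) (i j : Fin n) (hij : i ≠ j) (ci cj : ℕ)
    (hci : 0 < ci) (hcj : 0 < cj) :
    Fin (ci + cj - 1 + 1) ≃ Subtype (houghtonSet n i j ci cj) where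
  toFun t :=
    if h : (t : ℕ) < cj then ⟨(j, (t : ℕ)), Or.inl ⟨rfl, h⟩⟩
    else ⟨(i, (t : ℕ) - cj), Or.inr ⟨rfl, by have := t.isLt; omega⟩⟩
  invFun x := ⟨(if x.1.1 = j then x.1.2 else cj + x.1.2) % (ci + cj - 1 + 1),
    Nat.mod_lt _ (by omega)⟩
  left_inv t := by
    have ht := t.isLt
    by_cases h : (t : ℕ) < cj
    · apply Fin.ext
      simp only [dif_pos h]
      simp [Nat.mod_eq_of_lt (show (t : ℕ) < ci + cj - 1 + 1 by omega)]
    · apply Fin.ext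
      simp only [dif_neg h]
      simp [hij, show cj + ((t : ℕ) - cj) = (t : ℕ) from by omega,
        Nat.mod_eq_of_lt (show (t : ℕ) < ci + cj - 1 + 1 by omega)]
  right_inv := by
    rintro ⟨⟨r, m⟩, hx⟩
    apply Subtype.ext
    dsimp only
    rcases hx with ⟨hr, hm⟩ | ⟨hr, hm⟩
    · have hr' : r = j := hr
      have hm' : m < cj := hm
      simp [hr', hm', Nat.mod_eq_of_lt (show m < ci + cj - 1 + 1 by omega)]
    · have hr' : r = i := hr
      have hm' : m < ci := hm
      simp [hr', hij, Nat.mod_eq_of_lt (show cj + m < ci + cj - 1 + 1 by omega),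
        show ¬ (cj + m < cj) by omega]

lemma houghtonEquiv_coe (n : ℕ) (i j : Fin n) (hij : i ≠ j) (ci cj : ℕ)
    (hci : 0 < ci) (hcj : 0 < cj) (t : Fin (ci + cj - 1 + 1)) :
    ((houghtonEquiv n i j hij ci cj hci hcj t : Subtype (houghtonSet n i j ci cj)) :
        Fin n × ℕ) =
      if (t : ℕ) < cj then (j, (t : ℕ)) else (i, (t : ℕ) - cj) := by
  by_cases h : (t : ℕ) < cj
  · simp [houghtonEquiv, h]
  · simp [houghtonEquiv, h]

open Fin.NatCast in
lemma finRotate_pow (M c : ℕ) (t : Fin (M + 1)) :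
    ((finRotate (M + 1)) ^ c) t = t + (c : Fin (M + 1)) := by
  induction c generalizing t with
  | zero => simp
  | succ c ih =>
    rw [pow_succ, Equiv.Perm.mul_apply, finRotate_succ_apply, ih]
    push_cast
    abel

open Fin.NatCast in
lemma finRotate_pow_val (M c : ℕ) (t : Fin (M + 1)) :
    ((((finRotate (M + 1)) ^ c) t : Fin (M + 1)) : ℕ) = ((t : ℕ) + c) % (M + 1) := by
  rw [finRotate_pow, Fin.val_add, Fin.val_natCast]
  simp [Nat.add_mod_mod, Nat.mod_eq_of_lt t.isLt]



lemma houghton_comm_eq (n : ℕ) [NeZero n] (i j : Fin n) (hi : i ≠ 0) (hj : j ≠ 0)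
    (hij : i ≠ j) (ci cj : ℕ) (hci : 0 < ci) (hcj : 0 < cj) :
    (houghtonGen n i hi ^ ci)⁻¹ * (houghtonGen n j hj ^ cj)⁻¹ *
        houghtonGen n i hi ^ ci * houghtonGen n j hj ^ cj =
      Equiv.Perm.extendDomain ((finRotate (ci + cj - 1 + 1)) ^ cj)
        (houghtonEquiv n i j hij ci cj hci hcj) := by
  have hji : j ≠ i := hij.symm
  apply Equiv.ext
  rintro ⟨r, m⟩
  simp only [Equiv.Perm.mul_apply]
  by_cases h0 : r = 0
  · have s1 : (houghtonGen n j hj ^ cj) (r, m) = ((0 : Fin n), m + cj) := by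
      rw [houghtonGen_pow_apply]; simp [h0]
    have s2 : (houghtonGen n i hi ^ ci) ((0 : Fin n), m + cj) = ((0 : Fin n), m + cj + ci) := by
      rw [houghtonGen_pow_apply]; simp
    have s3 : ((houghtonGen n j hj ^ cj)⁻¹) ((0 : Fin n), m + cj + ci) = ((0 : Fin n), m + ci) := by
      rw [houghtonGen_pow_inv_apply]
      simp [show ¬ (m + cj + ci < cj) by omega, Prod.ext_iff]
      try omega
    have s4 : ((houghtonGen n i hi ^ ci)⁻¹) ((0 : Fin n), m + ci) = (r, m) := by
      rw [houghtonGen_pow_inv_apply]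
      simp [show ¬ (m + ci < ci) by omega, h0, Prod.ext_iff]
    have hnp : ¬ houghtonSet n i j ci cj (r, m) := by
      unfold houghtonSet
      rintro (⟨h, -⟩ | ⟨h, -⟩)
      · exact hj (by rw [← h, h0])
      · exact hi (by rw [← h, h0])
    rw [s1, s2, s3, s4, Equiv.Perm.extendDomain_apply_not_subtype _ _ hnp]
  · by_cases hrj : r = j
    · by_cases hm : m < cj
      · have s1 : (houghtonGen n j hj ^ cj) (r, m) = ((0 : Fin n), cj - 1 - m) := by
          rw [houghtonGen_pow_apply]; simp [hrj, hj, hm]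
        have s2 : (houghtonGen n i hi ^ ci) ((0 : Fin n), cj - 1 - m) =
            ((0 : Fin n), cj - 1 - m + ci) := by
          rw [houghtonGen_pow_apply]; simp
        have hxt : ((houghtonEquiv n i j hij ci cj hci hcj ⟨m, by omega⟩ :
            Subtype (houghtonSet n i j ci cj)) : Fin n × ℕ) = (r, m) := by
          rw [houghtonEquiv_coe]
          simp [hm, hrj]
        by_cases hmi : m < ci
        · have s3 : ((houghtonGen n j hj ^ cj)⁻¹) ((0 : Fin n), cj - 1 - m + ci) =
              ((0 : Fin n), ci - 1 - m) := by
            rw [houghtonGen_pow_inv_apply]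
            simp [show ¬ (cj - 1 - m + ci < cj) by omega, Prod.ext_iff]
            try omega
          have s4 : ((houghtonGen n i hi ^ ci)⁻¹) ((0 : Fin n), ci - 1 - m) = (i, m) := by
            rw [houghtonGen_pow_inv_apply]
            simp [show ci - 1 - m < ci by omega, Prod.ext_iff]
            try omega
          rw [s1, s2, s3, s4, ← hxt, Equiv.Perm.extendDomain_apply_image]
          have hev : ((((finRotate (ci + cj - 1 + 1)) ^ cj)
              (⟨m, by omega⟩ : Fin (ci + cj - 1 + 1))) : ℕ) = m + cj := by
            rw [finRotate_pow_val]
            show (m + cj) % (ci + cj - 1 + 1) = m + cj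
            exact Nat.mod_eq_of_lt (by omega)
          rw [houghtonEquiv_coe, hev, if_neg (by omega)]
          simp
        · have s3 : ((houghtonGen n j hj ^ cj)⁻¹) ((0 : Fin n), cj - 1 - m + ci) =
              (j, m - ci) := by
            rw [houghtonGen_pow_inv_apply]
            simp [show cj - 1 - m + ci < cj by omega, Prod.ext_iff]
            try omega
          have s4 : ((houghtonGen n i hi ^ ci)⁻¹) (j, m - ci) = (j, m - ci) := by
            rw [houghtonGen_pow_inv_apply]
            simp [hj, hji]
          rw [s1, s2, s3, s4, ← hxt, Equiv.Perm.extendDomain_apply_image]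
          have hev : ((((finRotate (ci + cj - 1 + 1)) ^ cj)
              (⟨m, by omega⟩ : Fin (ci + cj - 1 + 1))) : ℕ) = m - ci := by
            rw [finRotate_pow_val]
            show (m + cj) % (ci + cj - 1 + 1) = m - ci
            rw [Nat.mod_eq_sub_mod (by omega),
              show m + cj - (ci + cj - 1 + 1) = m - ci by omega]
            exact Nat.mod_eq_of_lt (by omega)
          rw [houghtonEquiv_coe, hev, if_pos (by omega)]
      · have s1 : (houghtonGen n j hj ^ cj) (r, m) = (j, m - cj) := by
          rw [houghtonGen_pow_apply]; simp [hrj, hj, hm]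
        have s2 : (houghtonGen n i hi ^ ci) (j, m - cj) = (j, m - cj) := by
          rw [houghtonGen_pow_apply]; simp [hj, hji]
        have s3 : ((houghtonGen n j hj ^ cj)⁻¹) (j, m - cj) = (j, m) := by
          rw [houghtonGen_pow_inv_apply]
          simp [hj, Prod.ext_iff]
          try omega
        have s4 : ((houghtonGen n i hi ^ ci)⁻¹) (j, m) = (r, m) := by
          rw [houghtonGen_pow_inv_apply]
          simp [hj, hji, hrj]
        have hnp : ¬ houghtonSet n i j ci cj (r, m) := by
          unfold houghtonSet
          rintro (⟨-, h⟩ | ⟨h, -⟩)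
          · exact hm h
          · exact hij (by rw [← h, hrj])
        rw [s1, s2, s3, s4, Equiv.Perm.extendDomain_apply_not_subtype _ _ hnp]
    · by_cases hri : r = i
      · by_cases hm : m < ci
        · have s1 : (houghtonGen n j hj ^ cj) (r, m) = (r, m) := by
            rw [houghtonGen_pow_apply]; simp [h0, hrj]
          have s2 : (houghtonGen n i hi ^ ci) (r, m) = ((0 : Fin n), ci - 1 - m) := by
            rw [houghtonGen_pow_apply]; simp [hri, hi, hm]
          have hxt : ((houghtonEquiv n i j hij ci cj hci hcj ⟨cj + m, by omega⟩ :
              Subtype (houghtonSet n i j ci cj)) : Fin n × ℕ) = (r, m) := by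
            rw [houghtonEquiv_coe]
            simp [show ¬ (cj + m < cj) by omega, hri]
          by_cases hcij : m + cj < ci
          · have s3 : ((houghtonGen n j hj ^ cj)⁻¹) ((0 : Fin n), ci - 1 - m) =
                ((0 : Fin n), ci - 1 - m - cj) := by
              rw [houghtonGen_pow_inv_apply]
              simp [show ¬ (ci - 1 - m < cj) by omega]
            have s4 : ((houghtonGen n i hi ^ ci)⁻¹) ((0 : Fin n), ci - 1 - m - cj) =
                (i, m + cj) := by
              rw [houghtonGen_pow_inv_apply]
              simp [show ci - 1 - m - cj < ci by omega, Prod.ext_iff]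
              try omega
            rw [s1, s2, s3, s4, ← hxt, Equiv.Perm.extendDomain_apply_image]
            have hev : ((((finRotate (ci + cj - 1 + 1)) ^ cj)
                (⟨cj + m, by omega⟩ : Fin (ci + cj - 1 + 1))) : ℕ) = cj + m + cj := by
              rw [finRotate_pow_val]
              show (cj + m + cj) % (ci + cj - 1 + 1) = cj + m + cj
              exact Nat.mod_eq_of_lt (by omega)
            rw [houghtonEquiv_coe, hev, if_neg (by omega)]
            simp [Prod.ext_iff]
            try omega
          · have s3 : ((houghtonGen n j hj ^ cj)⁻¹) ((0 : Fin n), ci - 1 - m) =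
                (j, cj - 1 - (ci - 1 - m)) := by
              rw [houghtonGen_pow_inv_apply]
              simp [show ci - 1 - m < cj by omega]
            have s4 : ((houghtonGen n i hi ^ ci)⁻¹) (j, cj - 1 - (ci - 1 - m)) =
                (j, cj - 1 - (ci - 1 - m)) := by
              rw [houghtonGen_pow_inv_apply]
              simp [hj, hji]
            rw [s1, s2, s3, s4, ← hxt, Equiv.Perm.extendDomain_apply_image]
            have hev : ((((finRotate (ci + cj - 1 + 1)) ^ cj)
                (⟨cj + m, by omega⟩ : Fin (ci + cj - 1 + 1))) : ℕ) = m + cj - ci := by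
              rw [finRotate_pow_val]
              show (cj + m + cj) % (ci + cj - 1 + 1) = m + cj - ci
              rw [Nat.mod_eq_sub_mod (by omega),
                show cj + m + cj - (ci + cj - 1 + 1) = m + cj - ci by omega]
              exact Nat.mod_eq_of_lt (by omega)
            rw [houghtonEquiv_coe, hev, if_pos (by omega)]
            simp [Prod.ext_iff]
            try omega
        · have s1 : (houghtonGen n j hj ^ cj) (r, m) = (r, m) := by
            rw [houghtonGen_pow_apply]; simp [h0, hrj]
          have s2 : (houghtonGen n i hi ^ ci) (r, m) = (i, m - ci) := by
            rw [houghtonGen_pow_apply]; simp [hri, hi, hm]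
          have s3 : ((houghtonGen n j hj ^ cj)⁻¹) (i, m - ci) = (i, m - ci) := by
            rw [houghtonGen_pow_inv_apply]
            simp [hi, hij]
          have s4 : ((houghtonGen n i hi ^ ci)⁻¹) (i, m - ci) = (r, m) := by
            rw [houghtonGen_pow_inv_apply]
            simp [hi, hri, Prod.ext_iff]
            try omega
          have hnp : ¬ houghtonSet n i j ci cj (r, m) := by
            unfold houghtonSet
            rintro (⟨h, -⟩ | ⟨-, h⟩)
            · exact hrj h
            · exact hm h
          rw [s1, s2, s3, s4, Equiv.Perm.extendDomain_apply_not_subtype _ _ hnp]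
      · have s1 : (houghtonGen n j hj ^ cj) (r, m) = (r, m) := by
          rw [houghtonGen_pow_apply]; simp [h0, hrj]
        have s2 : (houghtonGen n i hi ^ ci) (r, m) = (r, m) := by
          rw [houghtonGen_pow_apply]; simp [h0, hri]
        have s3 : ((houghtonGen n j hj ^ cj)⁻¹) (r, m) = (r, m) := by
          rw [houghtonGen_pow_inv_apply]
          simp [h0, hrj]
        have s4 : ((houghtonGen n i hi ^ ci)⁻¹) (r, m) = (r, m) := by
          rw [houghtonGen_pow_inv_apply]
          simp [h0, hri]
        have hnp : ¬ houghtonSet n i j ci cj (r, m) := by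
          unfold houghtonSet
          rintro (⟨h, -⟩ | ⟨h, -⟩)
          · exact hrj h
          · exact hri h
        rw [s1, s2, s3, s4, Equiv.Perm.extendDomain_apply_not_subtype _ _ hnp]

/-- In the Houghton group `H_n` (`n ≥ 3`), for distinct `i, j ≠ 0` and positive
integers `c_i, c_j`, the commutator `[g_i^{c_i}, g_j^{c_j}]` is an odd finitary
permutation if and only if both `c_i` and `c_j` are odd. -/
theorem houghton_commutator_odd_iff (n : ℕ) [NeZero n] (hn : 3 ≤ n)
    (i j : Fin n) (hi : i ≠ 0) (hj : j ≠ 0) (hij : i ≠ j) (ci cj : ℕ)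
    (hci : 0 < ci) (hcj : 0 < cj) :
    IsOddPerm ((houghtonGen n i hi ^ ci)⁻¹ * (houghtonGen n j hj ^ cj)⁻¹ *
        houghtonGen n i hi ^ ci * houghtonGen n j hj ^ cj) ↔
      Odd ci ∧ Odd cj := by
  rw [houghton_comm_eq n i j hi hj hij ci cj hci hcj, isOddPerm_extendDomain]
  have hsgn : Equiv.Perm.sign ((finRotate (ci + cj - 1 + 1)) ^ cj) =
      (-1 : ℤˣ) ^ ((ci + cj - 1) * cj) := by
    rw [map_pow, sign_finRotate, ← pow_mul, Nat.add_sub_cancel]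
  rw [hsgn]
  constructor
  · intro h
    have hodd : Odd ((ci + cj - 1) * cj) := by
      by_contra he
      rw [Nat.not_odd_iff_even] at he
      rw [he.neg_one_pow] at h
      exact absurd h (by decide)
    rw [Nat.odd_mul] at hodd
    obtain ⟨h1, h2⟩ := hodd
    refine ⟨?_, h2⟩
    rw [Nat.odd_iff] at *
    omega
  · rintro ⟨h1, h2⟩
    have hodd : Odd ((ci + cj - 1) * cj) := by
      rw [Nat.odd_mul]
      refine ⟨?_, h2⟩
      rw [Nat.odd_iff] at *
      omega
    exact hodd.neg_one_pow
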